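/- arXiv:2409.00961 — 3 statements merged into one kernel-verified Lean document; each statement's English description precedes it below -/
import Mathlib

section
/- Let H_k be Hamiltonians satisfying (H1)-(H3) converging uniformly on compact sets to a Hamiltonian H satisfying (H1)-(H3), let φ_k be ω-semiconcave functions converging uniformly to φ, and let x_k → x. Then liminf_{k→∞} H_k(x_k, p#_{φ_k,H_k}(x_k)) ≥ H(x, p#_{φ,H}(x)). -/
open MeasureTheory Filter Topology Set

noncomputable section

abbrev En (n : ℕ) := EuclideanSpace ℝ (Fin n)

/-- ω is a modulus: nonnegative, nondecreasing, upper semicontinuous on [0,∞), ω(0⁺)=0. -/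
def IsModulus (ω : ℝ → ℝ) : Prop :=
  (∀ r, 0 ≤ ω r) ∧ MonotoneOn ω (Set.Ici 0) ∧
    UpperSemicontinuousOn ω (Set.Ici 0) ∧
    Tendsto ω (nhdsWithin 0 (Set.Ioi 0)) (nhds 0)

/-- φ is ω-semiconcave on ℝⁿ. -/
def Semiconcave {n : ℕ} (ω : ℝ → ℝ) (φ : En n → ℝ) : Prop :=
  ∀ x y : En n, ∀ l ∈ Set.Icc (0:ℝ) 1,
    l * φ x + (1 - l) * φ y - φ (l • x + (1 - l) • y) ≤
      l * (1 - l) * ‖x - y‖ * ω ‖x - y‖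

/-- The (Dini/Fréchet) superdifferential D⁺φ(x) of an ω-semiconcave function. -/
def superdiff {n : ℕ} (ω : ℝ → ℝ) (φ : En n → ℝ) (x : En n) : Set (En n) :=
  {p | ∀ y, φ y ≤ φ x + (inner ℝ p (y - x) : ℝ) + ‖y - x‖ * ω ‖y - x‖}

/-- Conditions (H1)-(H3) on the Hamiltonian H, with p-gradient Hp. -/
structure HamCond {n : ℕ} (H : En n → En n → ℝ) (Hp : En n → En n → En n) : Prop where
  lip : LocallyLipschitz (Function.uncurry H)
  grad : ∀ x p, HasGradientAt (H x) (Hp x p) p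
  contHp : Continuous (Function.uncurry Hp)
  sconv : ∀ x, StrictConvexOn ℝ Set.univ (H x)
  superlin : ∀ c : ℝ, ∃ R : ℝ, ∀ (x p : En n), R ≤ ‖p‖ → c * ‖p‖ ≤ H x p

/-- The Lagrangian associated to H via the Legendre transform. -/
def Lag {n : ℕ} (H : En n → En n → ℝ) (x v : En n) : ℝ :=
  ⨆ p : En n, ((inner ℝ p v : ℝ) - H x p)

/-- pS is the minimal-energy selection of the superdifferential. -/
def IsMinSel {n : ℕ} (ω : ℝ → ℝ) (φ : En n → ℝ) (H : En n → En n → ℝ)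
    (pS : En n → En n) : Prop :=
  ∀ x, pS x ∈ superdiff ω φ x ∧ ∀ q ∈ superdiff ω φ x, H x (pS x) ≤ H x q

lemma tu_comp_subseq {α β ι ι' : Type*} [UniformSpace β] {F : ι → α → β} {f : α → β}
    {p : Filter ι} {q : Filter ι'} (h : TendstoUniformly F f p) {g : ι' → ι}
    (hg : Tendsto g q p) : TendstoUniformly (fun j => F (g j)) f q :=
  fun u hu => hg.eventually (h u hu)

lemma tlu_comp_subseq {α β ι ι' : Type*} [UniformSpace β] [TopologicalSpace α]
    {F : ι → α → β} {f : α → β} {p : Filter ι} {q : Filter ι'}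
    (h : TendstoLocallyUniformly F f p) {g : ι' → ι} (hg : Tendsto g q p) :
    TendstoLocallyUniformly (fun j => F (g j)) f q := fun u hu x => by
  obtain ⟨t, ht, hev⟩ := h u hu x
  exact ⟨t, ht, hg.eventually hev⟩

lemma semiconcave_limit {n : ℕ} {ω : ℝ → ℝ} {φk : ℕ → En n → ℝ} {φ : En n → ℝ}
    (hsc : ∀ k, Semiconcave ω (φk k)) (hφconv : TendstoUniformly φk φ atTop) :
    Semiconcave ω φ := by
  intro a b l hl
  have h1 := hφconv.tendsto_at a
  have h2 := hφconv.tendsto_at b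
  have h3 := hφconv.tendsto_at (l • a + (1 - l) • b)
  have ht : Tendsto (fun k => l * φk k a + (1 - l) * φk k b - φk k (l • a + (1 - l) • b)) atTop
      (𝓝 (l * φ a + (1 - l) * φ b - φ (l • a + (1 - l) • b))) :=
    ((h1.const_mul l).add (h2.const_mul (1 - l))).sub h3
  exact le_of_tendsto ht (Eventually.of_forall fun k => hsc k a b l hl)

lemma superdiff_upper {n : ℕ} {ω : ℝ → ℝ} {φ : En n → ℝ} {x p0 : En n}
    (hp0 : p0 ∈ superdiff ω φ x) (y : En n) :
    φ y ≤ φ x + ‖y - x‖ * (‖p0‖ + ω ‖y - x‖) := by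
  have h := hp0 y
  have h2 : (inner ℝ p0 (y - x) : ℝ) ≤ ‖p0‖ * ‖y - x‖ := real_inner_le_norm p0 (y - x)
  nlinarith [h, h2]

lemma coord_le_norm {n : ℕ} (v : En n) (i : Fin n) : |v i| ≤ ‖v‖ := by
  rw [EuclideanSpace.norm_eq]
  calc |v i| = Real.sqrt (‖v i‖ ^ 2) := by
        rw [Real.norm_eq_abs, Real.sqrt_sq_eq_abs, abs_abs]
  _ ≤ Real.sqrt (∑ j, ‖v j‖ ^ 2) :=
      Real.sqrt_le_sqrt (Finset.single_le_sum (f := fun j => ‖v j‖ ^ 2)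
        (fun j _ => sq_nonneg _) (Finset.mem_univ i))

/-- Jensen's inequality with error for semiconcave functions, `Fin m` version. -/
lemma jensen_fin {n : ℕ} {ω : ℝ → ℝ} {φ : En n → ℝ} (hφ : Semiconcave ω φ)
    {s : Set (En n)} (hs : Convex ℝ s) {E : ℝ} (hE0 : 0 ≤ E)
    (hE : ∀ a ∈ s, ∀ b ∈ s, ∀ l ∈ Set.Icc (0:ℝ) 1, l * (1 - l) * ‖a - b‖ * ω ‖a - b‖ ≤ E) :
    ∀ m : ℕ, ∀ w : Fin m → En n, ∀ c : Fin m → ℝ, (∀ i, 0 ≤ c i) → (∑ i, c i) = 1 →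
      (∀ i, w i ∈ s) → (∑ i, c i * φ (w i)) - m * E ≤ φ (∑ i, c i • w i) := by
  intro m
  induction m with
  | zero => intro w c hc hsum hw; simp at hsum
  | succ m ih =>
    intro w c hc hsum hw
    rw [Fin.sum_univ_succ] at hsum
    rw [Fin.sum_univ_succ (f := fun i => c i • w i), Fin.sum_univ_succ (f := fun i => c i * φ (w i))]
    have hc0le : c 0 ≤ 1 := by
      have : 0 ≤ ∑ i : Fin m, c i.succ :=
        Finset.sum_nonneg (fun i _ => hc i.succ)
      linarith
    by_cases h1 : c 0 = 1
    · have h0 : (∑ i : Fin m, c i.succ) = 0 := by rw [h1] at hsum; linarith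
      have hz : ∀ i : Fin m, c i.succ = 0 := fun i =>
        (Finset.sum_eq_zero_iff_of_nonneg (fun j _ => hc j.succ)).mp h0 i (Finset.mem_univ i)
      have e1 : (∑ i : Fin m, c i.succ • w i.succ) = 0 := by
        apply Finset.sum_eq_zero; intro i _; rw [hz i, zero_smul]
      have e2 : (∑ i : Fin m, c i.succ * φ (w i.succ)) = 0 := by
        apply Finset.sum_eq_zero; intro i _; rw [hz i, zero_mul]
      rw [e1, e2, h1]
      have hm : (0:ℝ) ≤ (m + 1 : ℕ) * E := by positivity
      push_cast at hm ⊢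
      simp only [one_smul, one_mul, add_zero]
      linarith
    · have hlt : c 0 < 1 := lt_of_le_of_ne hc0le h1
      have hd : (0:ℝ) < 1 - c 0 := by linarith
      set c' : Fin m → ℝ := fun i => c i.succ / (1 - c 0) with hc'def
      have hc' : ∀ i, 0 ≤ c' i := fun i => div_nonneg (hc _) hd.le
      have hsum' : (∑ i, c' i) = 1 := by
        rw [hc'def, ← Finset.sum_div]
        field_simp
        linarith
      set y' := ∑ i, c' i • w i.succ with hy'def
      have hy's : y' ∈ s := hs.sum_mem (fun i _ => hc' i) hsum' (fun i _ => hw _)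
      have ihy : (∑ i, c' i * φ (w i.succ)) - m * E ≤ φ (∑ i, c' i • w i.succ) :=
        ih (fun i => w i.succ) c' hc' hsum' (fun i => hw _)
      have hcomb : (∑ i : Fin m, c i.succ • w i.succ) = (1 - c 0) • y' := by
        rw [hy'def, Finset.smul_sum]
        apply Finset.sum_congr rfl
        intro i _
        rw [smul_smul, hc'def]
        congr 1
        field_simp
      have hsc := hφ (w 0) y' (c 0) ⟨hc 0, hlt.le⟩
      have herr := hE (w 0) (hw 0) y' hy's (c 0) ⟨hc 0, hlt.le⟩
      have hexp : (∑ i : Fin m, c i.succ * φ (w i.succ))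
          = (1 - c 0) * (∑ i, c' i * φ (w i.succ)) := by
        rw [Finset.mul_sum]
        apply Finset.sum_congr rfl
        intro i _
        rw [hc'def]
        field_simp
      have hih2 : (1 - c 0) * ((∑ i, c' i * φ (w i.succ)) - m * E) ≤ (1 - c 0) * φ y' :=
        mul_le_mul_of_nonneg_left (by rw [hy'def]; exact ihy) hd.le
      rw [hcomb]
      have hmE : (0:ℝ) ≤ (m:ℝ) * E := by positivity
      have hc0mE : (0:ℝ) ≤ c 0 * ((m:ℝ) * E) := mul_nonneg (hc 0) hmE
      push_cast
      nlinarith [hsc, herr, hih2, hexp, hc0mE]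

/-- Jensen over any fintype. -/
lemma jensen {n : ℕ} {ι : Type} [Fintype ι] {ω : ℝ → ℝ} {φ : En n → ℝ} (hφ : Semiconcave ω φ)
    {s : Set (En n)} (hs : Convex ℝ s) {E : ℝ} (hE0 : 0 ≤ E)
    (hE : ∀ a ∈ s, ∀ b ∈ s, ∀ l ∈ Set.Icc (0:ℝ) 1, l * (1 - l) * ‖a - b‖ * ω ‖a - b‖ ≤ E)
    (w : ι → En n) (c : ι → ℝ) (hc : ∀ i, 0 ≤ c i) (hsum : (∑ i, c i) = 1)
    (hw : ∀ i, w i ∈ s) :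
    (∑ i, c i * φ (w i)) - (Fintype.card ι) * E ≤ φ (∑ i, c i • w i) := by
  set e := (Fintype.equivFin ι).symm with he
  have h := jensen_fin hφ hs hE0 hE (Fintype.card ι) (fun j => w (e j)) (fun j => c (e j))
    (fun j => hc _) (by rw [Equiv.sum_comp e c]; exact hsum) (fun j => hw _)
  rwa [Equiv.sum_comp e (fun i => c i • w i), Equiv.sum_comp e (fun i => c i * φ (w i))] at h

/-- A semiconcave function is bounded below on the ball of radius 2. -/
lemma lower_bound_ball {n : ℕ} {ω : ℝ → ℝ} (hω : IsModulus ω) {φ : En n → ℝ}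
    (hφ : Semiconcave ω φ) (x : En n) :
    ∃ m0 : ℝ, m0 ≤ φ x ∧ ∀ y : En n, ‖y - x‖ ≤ 2 → m0 ≤ φ y := by
  obtain ⟨hω0, hωmono, -, -⟩ := hω
  set R : ℝ := 2 * n + 2 with hR
  have hRpos : (0:ℝ) < R := by positivity
  have h2R : (2:ℝ) ≤ R := by
    have : (0:ℝ) ≤ (n:ℝ) := Nat.cast_nonneg n
    rw [hR]; linarith
  set E : ℝ := (2 * R) * ω (2 * R) with hE
  have hE0 : 0 ≤ E := by
    have := hω0 (2 * R); positivity
  set s : Set (En n) := Metric.closedBall x R with hs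
  have hsconv : Convex ℝ s := convex_closedBall x R
  have hEbound : ∀ a ∈ s, ∀ b ∈ s, ∀ l ∈ Set.Icc (0:ℝ) 1,
      l * (1 - l) * ‖a - b‖ * ω ‖a - b‖ ≤ E := by
    intro a ha b hb l hl
    have hab : ‖a - b‖ ≤ 2 * R := by
      have h1 : dist a b ≤ dist a x + dist x b := dist_triangle a x b
      rw [Metric.mem_closedBall] at ha hb
      rw [← dist_eq_norm]
      rw [dist_comm x b] at h1
      linarith
    have hωab : ω ‖a - b‖ ≤ ω (2 * R) :=
      hωmono (mem_Ici.mpr (norm_nonneg _)) (mem_Ici.mpr (by positivity)) hab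
    have h4 : l * (1 - l) ≤ 1 := by nlinarith [hl.1, hl.2]
    have h5 : 0 ≤ l * (1 - l) := by nlinarith [hl.1, hl.2]
    have h6 : 0 ≤ ω ‖a - b‖ := hω0 _
    have h7 : 0 ≤ ‖a - b‖ := norm_nonneg _
    have h8 : 0 ≤ ‖a - b‖ * ω ‖a - b‖ := mul_nonneg h7 h6
    have h9 := mul_le_mul_of_nonneg_right h4 h8
    have h10a := mul_le_mul_of_nonneg_left hωab h7
    have h10b := mul_le_mul_of_nonneg_right hab (hω0 (2 * R))
    rw [hE]
    nlinarith [h9, h10a, h10b]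
  -- vertex family
  set w : Option (Fin n × Bool) → En n :=
    fun i => Option.elim i x
      (fun ib => x + (cond ib.2 R (-R)) • (EuclideanSpace.single ib.1 (1:ℝ))) with hwdef
  have hwnone : w none = x := rfl
  have hwsome : ∀ (i : Fin n) (b : Bool),
      w (some (i, b)) = x + (cond b R (-R)) • (EuclideanSpace.single i (1:ℝ)) := fun _ _ => rfl
  have hws : ∀ i, w i ∈ s := by
    rintro (_ | ⟨i, b⟩)
    · rw [hwnone]; exact Metric.mem_closedBall_self hRpos.le
    · rw [hwsome, hs, Metric.mem_closedBall, dist_eq_norm]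
      have h1 : x + (cond b R (-R)) • (EuclideanSpace.single i (1:ℝ)) - x
          = (cond b R (-R)) • (EuclideanSpace.single i (1:ℝ)) := by abel
      rw [h1, norm_smul, EuclideanSpace.norm_single]
      cases b <;> simp [abs_of_nonneg hRpos.le]
  set m0 : ℝ := (Finset.univ.inf' (by simp) (fun i => φ (w i)))
      - (Fintype.card (Option (Fin n × Bool))) * E with hm0
  refine ⟨m0, ?_, ?_⟩
  · have h1 : Finset.univ.inf' (by simp) (fun i => φ (w i)) ≤ φ (w none) :=
      Finset.inf'_le _ (Finset.mem_univ none)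
    have h2 : (0:ℝ) ≤ (Fintype.card (Option (Fin n × Bool))) * E := by positivity
    rw [hm0, hwnone] at *
    linarith
  · intro y hy
    set v : Fin n → ℝ := fun i => (y - x) i with hv
    have hvle : ∀ i, |v i| ≤ 2 := fun i => le_trans (coord_le_norm (y - x) i) hy
    set c : Option (Fin n × Bool) → ℝ :=
      fun i => Option.elim i (1 - (∑ j, |v j|) / R)
        (fun ib => (cond ib.2 (max (v ib.1) 0) (max (-(v ib.1)) 0)) / R) with hcdef
    have hcnone : c none = 1 - (∑ j, |v j|) / R := rfl
    have hcsome : ∀ (i : Fin n) (b : Bool),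
        c (some (i, b)) = (cond b (max (v i) 0) (max (-(v i)) 0)) / R := fun _ _ => rfl
    have habs : ∀ a : ℝ, max a 0 + max (-a) 0 = |a| := by
      intro a
      rcases le_total a 0 with h | h
      · rw [max_eq_right h, max_eq_left (neg_nonneg.mpr h), abs_of_nonpos h, zero_add]
      · rw [max_eq_left h, max_eq_right (neg_nonpos.mpr h), abs_of_nonneg h, add_zero]
    have habs2 : ∀ a : ℝ, max a 0 - max (-a) 0 = a := by
      intro a
      rcases le_total a 0 with h | h
      · rw [max_eq_right h, max_eq_left (neg_nonneg.mpr h)]; ring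
      · rw [max_eq_left h, max_eq_right (neg_nonpos.mpr h)]; ring
    have hsumabs : (∑ i, |v i|) ≤ 2 * n := by
      calc (∑ i, |v i|) ≤ ∑ _i : Fin n, (2:ℝ) := Finset.sum_le_sum (fun i _ => hvle i)
      _ = 2 * n := by simp [mul_comm]
    have hcnn : ∀ i, 0 ≤ c i := by
      rintro (_ | ⟨i, b⟩)
      · rw [hcnone, sub_nonneg, div_le_one hRpos]; linarith
      · rw [hcsome]
        apply div_nonneg _ hRpos.le
        cases b
        · exact le_max_right _ _
        · exact le_max_right _ _
    have hpairsum : ∀ i : Fin n, c (some (i, true)) + c (some (i, false)) = |v i| / R := by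
      intro i
      rw [hcsome, hcsome, Bool.cond_true, Bool.cond_false, ← add_div, habs (v i)]
    have hcsum : (∑ i, c i) = 1 := by
      rw [Fintype.sum_option]
      have h1 : (∑ i : Fin n × Bool, c (some i)) = (∑ i, |v i|) / R := by
        rw [Fintype.sum_prod_type, Finset.sum_div]
        apply Finset.sum_congr rfl
        intro i _
        rw [Fintype.sum_bool]
        exact hpairsum i
      rw [h1, hcnone]
      ring
    have hcomb : (∑ i, c i • w i) = y := by
      rw [Fintype.sum_option]
      have hterm : ∀ i : Fin n × Bool, c (some i) • w (some i)
          = c (some i) • x + ((cond i.2 R (-R)) * c (some i)) • (EuclideanSpace.single i.1 (1:ℝ)) := by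
        rintro ⟨i, b⟩
        rw [hwsome, smul_add, smul_smul, mul_comm]
      rw [Finset.sum_congr rfl (fun i _ => hterm i), Finset.sum_add_distrib]
      have hx1 : c none • w none + ((∑ i : Fin n × Bool, c (some i) • x)) = x := by
        rw [hwnone, ← Finset.sum_smul, ← add_smul]
        have h2 : c none + (∑ i : Fin n × Bool, c (some i)) = 1 := by
          rw [← Fintype.sum_option c]; exact hcsum
        rw [h2, one_smul]
      have hx2 : (∑ i : Fin n × Bool,
            ((cond i.2 R (-R)) * c (some i)) • (EuclideanSpace.single i.1 (1:ℝ)))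
          = y - x := by
        rw [Fintype.sum_prod_type]
        have hterm2 : ∀ i : Fin n,
            (∑ b : Bool, ((cond b R (-R)) * c (some (i, b))) • (EuclideanSpace.single i (1:ℝ)))
            = v i • (EuclideanSpace.single i (1:ℝ)) := by
          intro i
          rw [Fintype.sum_bool, hcsome, hcsome, Bool.cond_true, Bool.cond_false,
            Bool.cond_true, Bool.cond_false, ← add_smul]
          congr 1
          have h3 : R * (max (v i) 0 / R) = max (v i) 0 := by field_simp
          have h4 : (-R) * (max (-(v i)) 0 / R) = -(max (-(v i)) 0) := by field_simp
          rw [h3, h4, ← sub_eq_add_neg, habs2]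
        rw [Finset.sum_congr rfl (fun i _ => hterm2 i)]
        have hbasis := (EuclideanSpace.basisFun (Fin n) ℝ).sum_repr (y - x)
        simp only [EuclideanSpace.basisFun_repr, EuclideanSpace.basisFun_apply] at hbasis
        exact hbasis
      rw [hx2, ← add_assoc, hx1]
      abel
    have hJ := jensen hφ hsconv hE0 hEbound w c hcnn hcsum hws
    rw [hcomb] at hJ
    have hlow : (Finset.univ.inf' (by simp) (fun i => φ (w i))) ≤ ∑ i, c i * φ (w i) := by
      calc (Finset.univ.inf' (by simp) (fun i => φ (w i)))
          = (∑ i, c i) * (Finset.univ.inf' (by simp) (fun i => φ (w i))) := by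
            rw [hcsum, one_mul]
      _ = ∑ i, c i * (Finset.univ.inf' (by simp) (fun i => φ (w i))) := by rw [Finset.sum_mul]
      _ ≤ ∑ i, c i * φ (w i) := by
          apply Finset.sum_le_sum
          intro i _
          exact mul_le_mul_of_nonneg_left (Finset.inf'_le _ (Finset.mem_univ i)) (hcnn i)
    rw [hm0]
    linarith

lemma cont_at_of_near {n : ℕ} {K : ℝ} (hK : 0 ≤ K) {φ : En n → ℝ} {x : En n}
    (h : ∀ y : En n, ‖y - x‖ ≤ 2 → |φ y - φ x| ≤ ‖y - x‖ * K) : ContinuousAt φ x := by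
  rw [Metric.continuousAt_iff]
  intro ε hε
  have hKp : (0:ℝ) < K + 1 := by linarith
  refine ⟨min 2 (ε / (K + 1)), by positivity, ?_⟩
  intro y hy
  have hd : dist y x = ‖y - x‖ := dist_eq_norm y x
  have h1 : ‖y - x‖ ≤ 2 := by
    rw [hd] at hy; exact le_of_lt (lt_of_lt_of_le hy (min_le_left _ _))
  have h2 : ‖y - x‖ < ε / (K + 1) := by
    rw [hd] at hy; exact lt_of_lt_of_le hy (min_le_right _ _)
  have h3 := h y h1
  rw [Real.dist_eq]
  have h4 : ‖y - x‖ * K ≤ ‖y - x‖ * (K + 1) := by nlinarith [norm_nonneg (y - x)]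
  have h5 : ‖y - x‖ * (K + 1) < (ε / (K + 1)) * (K + 1) := mul_lt_mul_of_pos_right h2 hKp
  rw [div_mul_cancel₀ _ (ne_of_gt hKp)] at h5
  linarith

lemma key_limit {n : ℕ} {ω : ℝ → ℝ} (hω : IsModulus ω)
    {φk : ℕ → En n → ℝ} {φ : En n → ℝ}
    (hφconv : TendstoUniformly φk φ atTop)
    {xk : ℕ → En n} {x : En n} (hx : Tendsto xk atTop (𝓝 x))
    {pk : ℕ → En n}
    (hmem : ∀ k, pk k ∈ superdiff ω (φk k) (xk k))
    (hφx : ContinuousAt φ x)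
    {σ : ℕ → ℕ} (hσ : Tendsto σ atTop atTop)
    {q : En n} (hq : Tendsto (fun j => pk (σ j)) atTop (𝓝 q)) :
    q ∈ superdiff ω φ x := by
  intro y
  set t := ‖y - x‖ with htdef
  have ht0 : (0:ℝ) ≤ t := norm_nonneg _
  have hωt0 : 0 ≤ ω t := hω.1 t
  apply le_of_forall_pos_le_add
  intro ε hε
  set B : ℝ := 5 + ω t + t with hB
  have hBpos : 0 < B := by rw [hB]; linarith
  set δ : ℝ := min 1 (ε / B) with hδ
  have hδpos : 0 < δ := lt_min one_pos (by positivity)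
  have hδ1 : δ ≤ 1 := min_le_left _ _
  have hδB : δ * B ≤ ε := by
    have h := min_le_right (1:ℝ) (ε / B)
    calc δ * B ≤ (ε / B) * B := mul_le_mul_of_nonneg_right h (le_of_lt hBpos)
    _ = ε := div_mul_cancel₀ _ (ne_of_gt hBpos)
  have E1 : ∀ᶠ j in atTop, dist (φk (σ j) y) (φ y) < δ :=
    Metric.tendsto_nhds.mp ((hφconv.tendsto_at y).comp hσ) δ hδpos
  have E2full : Tendsto (fun k => φk k (xk k)) atTop (𝓝 (φ x)) :=
    hφconv.tendsto_comp hφx hx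
  have E2 : ∀ᶠ j in atTop, dist (φk (σ j) (xk (σ j))) (φ x) < δ :=
    Metric.tendsto_nhds.mp (E2full.comp hσ) δ hδpos
  have E3t : Tendsto (fun j => (inner ℝ (pk (σ j)) (y - xk (σ j)) : ℝ)) atTop
      (𝓝 (inner ℝ q (y - x) : ℝ)) :=
    hq.inner (tendsto_const_nhds.sub (hx.comp hσ))
  have E3 : ∀ᶠ j in atTop,
      dist ((inner ℝ (pk (σ j)) (y - xk (σ j)) : ℝ)) ((inner ℝ q (y - x) : ℝ)) < δ :=
    Metric.tendsto_nhds.mp E3t δ hδpos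
  have E4t : Tendsto (fun j => ‖y - xk (σ j)‖) atTop (𝓝 t) :=
    (tendsto_const_nhds.sub (hx.comp hσ)).norm
  have E4a : ∀ᶠ j in atTop, ‖y - xk (σ j)‖ < t + δ :=
    E4t.eventually (eventually_lt_nhds (by linarith))
  have husc := hω.2.2.1 t (mem_Ici.mpr ht0)
  have hevω : ∀ᶠ s in 𝓝[Set.Ici 0] t, ω s < ω t + δ := husc (ω t + δ) (by linarith)
  have htjw : Tendsto (fun j => ‖y - xk (σ j)‖) atTop (𝓝[Set.Ici 0] t) :=
    tendsto_nhdsWithin_iff.mpr ⟨E4t, Eventually.of_forall fun j => mem_Ici.mpr (norm_nonneg _)⟩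
  have E4b : ∀ᶠ j in atTop, ω ‖y - xk (σ j)‖ < ω t + δ := htjw.eventually hevω
  obtain ⟨j, h1, h2, h3, h4a, h4b⟩ := (E1.and (E2.and (E3.and (E4a.and E4b)))).exists
  have hs := hmem (σ j) y
  set tj := ‖y - xk (σ j)‖ with htj
  have htj0 : (0:ℝ) ≤ tj := norm_nonneg _
  have hωtj0 : 0 ≤ ω tj := hω.1 tj
  have a1' : |φk (σ j) y - φ y| < δ := by rwa [Real.dist_eq] at h1
  have a2' : |φk (σ j) (xk (σ j)) - φ x| < δ := by rwa [Real.dist_eq] at h2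
  have a3' : |(inner ℝ (pk (σ j)) (y - xk (σ j)) : ℝ) - (inner ℝ q (y - x) : ℝ)| < δ := by
    rwa [Real.dist_eq] at h3
  have a1 := abs_lt.mp a1'
  have a2 := abs_lt.mp a2'
  have a3 := abs_lt.mp a3'
  have hmul : tj * ω tj ≤ (t + δ) * (ω t + δ) :=
    mul_le_mul (le_of_lt h4a) (le_of_lt h4b) hωtj0 (by linarith)
  have hδB' : δ * (5 + ω t + t) ≤ ε := by rw [hB] at hδB; exact hδB
  nlinarith [hs, a1.1, a1.2, a2.1, a2.2, a3.1, a3.2, hmul, hδB', hδ1, hδpos.le, ht0, hωt0]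

set_option maxHeartbeats 2000000 in
/-- lower semicontinuity of the minimal energy under convergence. -/
theorem stmt_6 {n : ℕ} (ω : ℝ → ℝ) (hω : IsModulus ω)
    (Hk : ℕ → En n → En n → ℝ) (Hpk : ℕ → En n → En n → En n)
    (hHk : ∀ k, HamCond (Hk k) (Hpk k))
    (H : En n → En n → ℝ) (Hp : En n → En n → En n) (hH : HamCond H Hp)
    (hHconv : TendstoLocallyUniformly (fun k => Function.uncurry (Hk k))
      (Function.uncurry H) atTop)
    (φk : ℕ → En n → ℝ) (φ : En n → ℝ)
    (hsc : ∀ k, Semiconcave ω (φk k))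
    (hφconv : TendstoUniformly φk φ atTop)
    (pSk : ℕ → En n → En n) (hpSk : ∀ k, IsMinSel ω (φk k) (Hk k) (pSk k))
    (pS : En n → En n) (hpS : IsMinSel ω φ H pS)
    (xk : ℕ → En n) (x : En n) (hx : Tendsto xk atTop (𝓝 x)) :
    H x (pS x) ≤ Filter.liminf (fun k => Hk k (xk k) (pSk k (xk k))) atTop := by
  have hφsc : Semiconcave ω φ := semiconcave_limit hsc hφconv
  obtain ⟨m0, hm0x, hm0⟩ := lower_bound_ball hω hφsc x
  have hp0 : pS x ∈ superdiff ω φ x := (hpS x).1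
  have hω2 : 0 ≤ ω 2 := hω.1 2
  have hω1 : 0 ≤ ω 1 := hω.1 1
  have hpn : (0:ℝ) ≤ ‖pS x‖ := norm_nonneg _
  set K : ℝ := ‖pS x‖ + 2 * ω 2 + (φ x - m0) / 2 with hK
  have hK0 : 0 ≤ K := by rw [hK]; linarith
  have hnear : ∀ y : En n, ‖y - x‖ ≤ 2 → |φ y - φ x| ≤ ‖y - x‖ * K := by
    intro y hy
    have ht0 : (0:ℝ) ≤ ‖y - x‖ := norm_nonneg _
    have hωy : ω ‖y - x‖ ≤ ω 2 :=
      hω.2.1 (mem_Ici.mpr ht0) (mem_Ici.mpr (by norm_num)) hy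
    rw [abs_le]
    constructor
    · -- lower bound
      by_cases hyx : y = x
      · rw [hyx]; simp
      · have htpos : 0 < ‖y - x‖ := norm_pos_iff.mpr (sub_ne_zero.mpr hyx)
        set l : ℝ := ‖y - x‖ / 2 with hl
        have hl0 : 0 < l := by positivity
        have hl1 : l ≤ 1 := by rw [hl]; linarith
        set wpt : En n := x + (2 / ‖y - x‖) • (y - x) with hwpt
        have hwx : wpt - x = (2 / ‖y - x‖) • (y - x) := by rw [hwpt]; abel
        have hwn : ‖wpt - x‖ = 2 := by
          rw [hwx, norm_smul, Real.norm_eq_abs, abs_of_pos (by positivity)]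
          field_simp
        have hwball : m0 ≤ φ wpt := hm0 wpt (le_of_eq hwn)
        have hls : l * (2 / ‖y - x‖) = 1 := by rw [hl]; field_simp
        have hcomb : l • wpt + (1 - l) • x = y := by
          rw [hwpt, smul_add, smul_smul, hls, one_smul]
          module
        have hsc3 := hφsc wpt x l ⟨hl0.le, hl1⟩
        rw [hcomb, hwn] at hsc3
        have herr : l * (1 - l) * 2 * ω 2 ≤ l * (2 * ω 2) := by
          nlinarith [mul_nonneg (mul_nonneg hl0.le hl0.le) hω2]
        have h5 : l * m0 ≤ l * φ wpt := mul_le_mul_of_nonneg_left hwball hl0.le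
        have h6 : l * (φ x - m0 + 2 * ω 2) ≤ ‖y - x‖ * K := by
          rw [hK, hl]
          nlinarith [mul_nonneg ht0 hpn, mul_nonneg ht0 hω2]
        linarith [hsc3, herr, h5, h6]
    · -- upper bound
      have h := superdiff_upper hp0 y
      have h2 : ‖y - x‖ * (‖pS x‖ + ω ‖y - x‖) ≤ ‖y - x‖ * K := by
        apply mul_le_mul_of_nonneg_left _ ht0
        rw [hK]; linarith
      linarith
  have hφx : ContinuousAt φ x := cont_at_of_near hK0 hnear
  have hmem : ∀ k, pSk k (xk k) ∈ superdiff ω (φk k) (xk k) := fun k => (hpSk k (xk k)).1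
  set C : ℝ := φ x + (1/2) * (‖pS x‖ + ω 2) + 1 - m0 + ω 1 with hC
  have hC0 : 0 ≤ C := by rw [hC]; linarith
  have hCev : ∀ᶠ k in atTop, ‖pSk k (xk k)‖ ≤ C := by
    have h1 : ∀ᶠ k in atTop, dist (xk k) x < 1/2 :=
      Metric.tendsto_nhds.mp hx (1/2) (by norm_num)
    have h2 : ∀ᶠ k in atTop, ∀ z, dist (φ z) (φk k z) < 1/2 :=
      Metric.tendstoUniformly_iff.mp hφconv (1/2) (by norm_num)
    filter_upwards [h1, h2] with k hk1 hk2
    by_cases hq0 : pSk k (xk k) = 0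
    · rw [hq0, norm_zero]; exact hC0
    · have hqn : (0:ℝ) < ‖pSk k (xk k)‖ := norm_pos_iff.mpr hq0
      set yy : En n := xk k - ‖pSk k (xk k)‖⁻¹ • pSk k (xk k) with hyy
      have hyx : yy - xk k = -(‖pSk k (xk k)‖⁻¹ • pSk k (xk k)) := by rw [hyy]; abel
      have hyn : ‖yy - xk k‖ = 1 := by
        rw [hyx, norm_neg, norm_smul, norm_inv, norm_norm, inv_mul_cancel₀ (ne_of_gt hqn)]
      have hinner : (inner ℝ (pSk k (xk k)) (yy - xk k) : ℝ) = -‖pSk k (xk k)‖ := by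
        rw [hyx, inner_neg_right, real_inner_smul_right, real_inner_self_eq_norm_sq]
        rw [sq, ← mul_assoc, inv_mul_cancel₀ (ne_of_gt hqn), one_mul]
      have hs := hmem k yy
      rw [hinner, hyn] at hs
      have hxkx : ‖xk k - x‖ ≤ 1/2 := by rw [← dist_eq_norm]; exact hk1.le
      have hub : φ (xk k) ≤ φ x + (1/2) * (‖pS x‖ + ω 2) := by
        have h := superdiff_upper hp0 (xk k)
        have hωxk : ω ‖xk k - x‖ ≤ ω 2 :=
          hω.2.1 (mem_Ici.mpr (norm_nonneg _)) (mem_Ici.mpr (by norm_num)) (by linarith)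
        have h3 : ‖xk k - x‖ * (‖pS x‖ + ω ‖xk k - x‖) ≤ (1/2) * (‖pS x‖ + ω 2) :=
          mul_le_mul hxkx (by linarith) (by have := hω.1 ‖xk k - x‖; linarith) (by norm_num)
        linarith
      have hyyx : ‖yy - x‖ ≤ 2 := by
        have hd : yy - x = (xk k - x) + (yy - xk k) := by abel
        calc ‖yy - x‖ = ‖(xk k - x) + (yy - xk k)‖ := by rw [← hd]
        _ ≤ ‖xk k - x‖ + ‖yy - xk k‖ := norm_add_le _ _
        _ ≤ 2 := by rw [hyn]; linarith
      have hlb : m0 ≤ φ yy := hm0 yy hyyx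
      have d1 : |φ (xk k) - φk k (xk k)| < 1/2 := by
        have := hk2 (xk k); rwa [Real.dist_eq] at this
      have d2 : |φ yy - φk k yy| < 1/2 := by
        have := hk2 yy; rwa [Real.dist_eq] at this
      have d1' := abs_lt.mp d1
      have d2' := abs_lt.mp d2
      rw [hC]
      linarith [hs, hub, hlb, d1'.1, d1'.2, d2'.1, d2'.2]
  have hball : IsCompact (Metric.closedBall (0 : En n) C) := isCompact_closedBall 0 C
  obtain ⟨N, hN⟩ := eventually_atTop.mp hCev
  obtain ⟨a, ha, ψ, hψmono, hψt⟩ := hball.tendsto_subseq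
    (x := fun j => pSk (j + N) (xk (j + N)))
    (fun j => mem_closedBall_zero_iff.mpr (hN (j + N) (Nat.le_add_left N j)))
  have hσ0t : Tendsto (fun j => ψ j + N) atTop atTop :=
    tendsto_atTop_mono (fun j => Nat.le_add_right (ψ j) N) hψmono.tendsto_atTop
  have hσ0p : Tendsto (fun j => pSk (ψ j + N) (xk (ψ j + N))) atTop (𝓝 a) := hψt
  have hHcont : Continuous (Function.uncurry H) := hH.lip.continuous
  have hucomp : ∀ (σ : ℕ → ℕ), Tendsto σ atTop atTop → ∀ (b : En n),
      Tendsto (fun j => pSk (σ j) (xk (σ j))) atTop (𝓝 b) →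
      Tendsto (fun j => Hk (σ j) (xk (σ j)) (pSk (σ j) (xk (σ j)))) atTop (𝓝 (H x b)) := by
    intro σ hσ b hb
    have h1 : TendstoLocallyUniformly (fun j => Function.uncurry (Hk (σ j)))
        (Function.uncurry H) atTop := tlu_comp_subseq hHconv hσ
    have h2 : Tendsto (fun j => ((xk (σ j), pSk (σ j) (xk (σ j))) : En n × En n)) atTop
        (𝓝 (x, b)) := (hx.comp hσ).prodMk_nhds hb
    exact h1.tendsto_comp hHcont.continuousAt h2
  have hamem : a ∈ superdiff ω φ x := key_limit hω hφconv hx hmem hφx hσ0t hσ0p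
  have hu0 : Tendsto (fun j => Hk (ψ j + N) (xk (ψ j + N)) (pSk (ψ j + N) (xk (ψ j + N))))
      atTop (𝓝 (H x a)) := hucomp _ hσ0t a hσ0p
  have hfreq : ∃ᶠ k in atTop, Hk k (xk k) (pSk k (xk k)) ≤ H x a + 1 := by
    apply hσ0t.frequently
    exact (hu0.eventually (eventually_le_nhds (by linarith))).frequently
  rw [Filter.liminf_eq]
  have hbddS : BddAbove {b : ℝ | ∀ᶠ k in atTop, b ≤ Hk k (xk k) (pSk k (xk k))} := by
    refine ⟨H x a + 1, ?_⟩
    intro b hb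
    obtain ⟨k, hk1, hk2⟩ := (Filter.Eventually.and_frequently hb hfreq).exists
    exact le_trans hk1 hk2
  apply le_of_forall_pos_le_add
  intro ε hε
  have hev : ∀ᶠ k in atTop, H x (pS x) - ε ≤ Hk k (xk k) (pSk k (xk k)) := by
    by_contra hcon
    rw [Filter.not_eventually] at hcon
    have hfr : ∃ᶠ k in atTop, Hk k (xk k) (pSk k (xk k)) < H x (pS x) - ε :=
      hcon.mono (fun k hk => by linarith [not_le.mp hk])
    have hfr2 : ∃ᶠ k in atTop,
        (Hk k (xk k) (pSk k (xk k)) < H x (pS x) - ε ∧ ‖pSk k (xk k)‖ ≤ C) :=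
      hfr.and_eventually hCev
    obtain ⟨τ, hτmono, hτ⟩ := Filter.extraction_of_frequently_atTop hfr2
    obtain ⟨b, hbball, ψ2, hψ2mono, hψ2t⟩ := hball.tendsto_subseq
      (x := fun j => pSk (τ j) (xk (τ j)))
      (fun j => mem_closedBall_zero_iff.mpr (hτ j).2)
    have hσt : Tendsto (fun j => τ (ψ2 j)) atTop atTop :=
      hτmono.tendsto_atTop.comp hψ2mono.tendsto_atTop
    have hbp : Tendsto (fun j => pSk (τ (ψ2 j)) (xk (τ (ψ2 j)))) atTop (𝓝 b) := hψ2t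
    have hbmem : b ∈ superdiff ω φ x := key_limit hω hφconv hx hmem hφx hσt hbp
    have hAb : H x (pS x) ≤ H x b := (hpS x).2 b hbmem
    have hub := hucomp _ hσt b hbp
    have hlt : ∀ᶠ j in atTop,
        H x (pS x) - ε < Hk (τ (ψ2 j)) (xk (τ (ψ2 j))) (pSk (τ (ψ2 j)) (xk (τ (ψ2 j)))) :=
      hub.eventually (eventually_gt_nhds (by linarith))
    obtain ⟨j, hj⟩ := hlt.exists
    exact absurd (hτ (ψ2 j)).1 (not_lt.mpr hj.le)
  have hle : H x (pS x) - ε ≤ sSup {b : ℝ | ∀ᶠ k in atTop, b ≤ Hk k (xk k) (pSk k (xk k))} :=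
    le_csSup hbddS hev
  linarith
end
end

section
/- Under the hypotheses of the previous statement, if additionally lim_{k→∞} H_k(x_k, p#_{φ_k,H_k}(x_k)) = H(x, p#_{φ,H}(x)), then lim_{k→∞} p#_{φ_k,H_k}(x_k) = p#_{φ,H}(x). -/
open MeasureTheory Filter Topology Set

noncomputable section

lemma tlu_comp {α β : Type*} [TopologicalSpace α] [UniformSpace β]
    {F : ℕ → α → β} {f : α → β} (h : TendstoLocallyUniformly F f atTop)
    {g : ℕ → ℕ} (hg : Tendsto g atTop atTop) :
    TendstoLocallyUniformly (fun m => F (g m)) f atTop := fun u hu z =>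
  (h u hu z).imp fun _t ht => ⟨ht.1, hg.eventually ht.2⟩

lemma tu_comp {α β : Type*} [UniformSpace β]
    {F : ℕ → α → β} {f : α → β} (h : TendstoUniformly F f atTop)
    {g : ℕ → ℕ} (hg : Tendsto g atTop atTop) :
    TendstoUniformly (fun m => F (g m)) f atTop := fun u hu =>
  hg.eventually (h u hu)

set_option maxHeartbeats 1000000 in
/-- convergence of energies implies convergence of minimal-energy selections. -/
theorem stmt_7 {n : ℕ} (ω : ℝ → ℝ) (hω : IsModulus ω)
    (Hk : ℕ → En n → En n → ℝ) (Hpk : ℕ → En n → En n → En n)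
    (hHk : ∀ k, HamCond (Hk k) (Hpk k))
    (H : En n → En n → ℝ) (Hp : En n → En n → En n) (hH : HamCond H Hp)
    (hHconv : TendstoLocallyUniformly (fun k => Function.uncurry (Hk k))
      (Function.uncurry H) atTop)
    (φk : ℕ → En n → ℝ) (φ : En n → ℝ)
    (hsc : ∀ k, Semiconcave ω (φk k))
    (hφconv : TendstoUniformly φk φ atTop)
    (pSk : ℕ → En n → En n) (hpSk : ∀ k, IsMinSel ω (φk k) (Hk k) (pSk k))
    (pS : En n → En n) (hpS : IsMinSel ω φ H pS)
    (xk : ℕ → En n) (x : En n) (hx : Tendsto xk atTop (𝓝 x))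
    (hE : Tendsto (fun k => Hk k (xk k) (pSk k (xk k))) atTop (𝓝 (H x (pS x)))) :
    Tendsto (fun k => pSk k (xk k)) atTop (𝓝 (pS x)) := by
  obtain ⟨hω0, hωmono, hωusc, -⟩ := hω
  have hωm : ∀ a b : ℝ, 0 ≤ a → a ≤ b → ω a ≤ ω b := fun a b ha hab =>
    hωmono (show a ∈ Set.Ici (0:ℝ) from ha) (show b ∈ Set.Ici (0:ℝ) from le_trans ha hab) hab
  set C := ‖pS x‖ with hC
  have hC0 : 0 ≤ C := norm_nonneg _
  have hpSx : ∀ y, φ y ≤ φ x + (inner ℝ (pS x) (y - x) : ℝ) + ‖y - x‖ * ω ‖y - x‖ := (hpS x).1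
  -- upper bound for φ near x
  have hupper : ∀ z, φ z ≤ φ x + C * ‖z - x‖ + ‖z - x‖ * ω ‖z - x‖ := by
    intro z
    have h1 := hpSx z
    have h2 : (inner ℝ (pS x) (z - x) : ℝ) ≤ C * ‖z - x‖ := by
      calc (inner ℝ (pS x) (z - x) : ℝ) ≤ ‖pS x‖ * ‖z - x‖ := real_inner_le_norm _ _
        _ = C * ‖z - x‖ := by rw [hC]
    linarith
  set Q : ℕ → En n := fun k => pSk k (xk k) with hQ
  -- subsequence argument
  apply tendsto_of_subseq_tendsto
  intro ns hns
  by_cases hbd : ∃ B : ℝ, ∃ᶠ m in atTop, ‖Q (ns m)‖ ≤ B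
  · -- bounded case: extract a convergent subsequence and identify its limit
    obtain ⟨B, hB⟩ := hbd
    obtain ⟨σ₀, hσ₀mono, hσ₀⟩ := extraction_of_frequently_atTop hB
    obtain ⟨a, -, σ₁, hσ₁, hPa⟩ := tendsto_subseq_of_bounded Metric.isBounded_closedBall
      (x := fun m => Q (ns (σ₀ m))) (fun m => mem_closedBall_zero_iff.mpr (hσ₀ m))
    set τ : ℕ → ℕ := fun m => σ₀ (σ₁ m) with hτdef
    set J : ℕ → ℕ := fun m => ns (τ m) with hJdef
    have hτ : Tendsto τ atTop atTop := (hσ₀mono.comp hσ₁).tendsto_atTop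
    have hJ : Tendsto J atTop atTop := hns.comp hτ
    have hxJ : Tendsto (fun m => xk (J m)) atTop (𝓝 x) := hx.comp hJ
    have hqJ : Tendsto (fun m => pSk (J m) (xk (J m))) atTop (𝓝 a) := hPa
    -- norms of xk (J m) - x tend to 0
    have hr₁ : Tendsto (fun m => ‖xk (J m) - x‖) atTop (𝓝 0) := by
      simpa using (hxJ.sub (tendsto_const_nhds (x := x))).norm
    have hr₂ : Tendsto (fun m => ‖x - xk (J m)‖) atTop (𝓝 0) := by
      simpa using ((tendsto_const_nhds (x := x)).sub hxJ).norm
    have hrω : ∀ (r : ℕ → ℝ), (∀ m, 0 ≤ r m) → Tendsto r atTop (𝓝 0) →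
        Tendsto (fun m => r m * ω (r m)) atTop (𝓝 0) := by
      intro r hr0 hrt
      refine squeeze_zero' (g := fun m => r m * ω 1) (Eventually.of_forall fun m => mul_nonneg (hr0 m) (hω0 _)) ?_ ?_
      · filter_upwards [hrt.eventually (eventually_le_nhds (by norm_num : (0:ℝ) < 1))] with m hm
        exact mul_le_mul_of_nonneg_left (hωm _ _ (hr0 m) hm) (hr0 m)
      · simpa using hrt.mul_const (ω 1)
    have hrω₁ := hrω _ (fun m => norm_nonneg _) hr₁
    have hrω₂ := hrω _ (fun m => norm_nonneg _) hr₂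
    have hφkJx : Tendsto (fun m => φk (J m) x) atTop (𝓝 (φ x)) :=
      (hφconv.tendsto_at x).comp hJ
    -- φk (J m) (xk (J m)) - φ (xk (J m)) → 0
    have hdiff : Tendsto (fun m => φk (J m) (xk (J m)) - φ (xk (J m))) atTop (𝓝 0) := by
      rw [Metric.tendsto_nhds]
      intro ε hε
      filter_upwards [hJ.eventually ((Metric.tendstoUniformly_iff.mp hφconv) ε hε)] with m hm
      have h := hm (xk (J m))
      rw [Real.dist_eq] at h
      rw [Real.dist_eq, sub_zero, abs_sub_comm]
      exact h
    -- φk (J m) (xk (J m)) → φ x, by squeezing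
    have hφxJ : Tendsto (fun m => φk (J m) (xk (J m))) atTop (𝓝 (φ x)) := by
      have hlb : Tendsto (fun m => φk (J m) x -
          (inner ℝ (pSk (J m) (xk (J m))) (x - xk (J m)) : ℝ) -
          ‖x - xk (J m)‖ * ω ‖x - xk (J m)‖) atTop (𝓝 (φ x)) := by
        have := (hφkJx.sub (hqJ.inner ((tendsto_const_nhds (x := x)).sub hxJ))).sub hrω₂
        simpa using this
      have hub : Tendsto (fun m => (φk (J m) (xk (J m)) - φ (xk (J m))) +
          (φ x + C * ‖xk (J m) - x‖ + ‖xk (J m) - x‖ * ω ‖xk (J m) - x‖)) atTop (𝓝 (φ x)) := by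
        have := hdiff.add (((tendsto_const_nhds (x := φ x)).add (hr₁.const_mul C)).add hrω₁)
        simpa using this
      refine tendsto_of_tendsto_of_tendsto_of_le_of_le' hlb hub ?_ ?_
      · refine Eventually.of_forall fun m => ?_
        have hp := (hpSk (J m) (xk (J m))).1
        simp only [superdiff, Set.mem_setOf_eq] at hp
        have h0 := hp x
        linarith
      · refine Eventually.of_forall fun m => ?_
        have := hupper (xk (J m))
        linarith
    -- the limit a belongs to the superdifferential of φ at x
    have ha : a ∈ superdiff ω φ x := by
      simp only [superdiff, Set.mem_setOf_eq]
      intro y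
      rcases eq_or_ne y x with rfl | hyx
      · simp
      · have hr₀ : (0:ℝ) < ‖y - x‖ := norm_pos_iff.mpr (sub_ne_zero.mpr hyx)
        have key : ∀ ε > (0:ℝ),
            φ y ≤ φ x + (inner ℝ a (y - x) : ℝ) + ‖y - x‖ * ω ‖y - x‖ + ε := by
          intro ε hε
          set δ := ε / ‖y - x‖ with hδdef
          have hδ : 0 < δ := div_pos hε hr₀
          have husc := hωusc ‖y - x‖ (show ‖y - x‖ ∈ Set.Ici (0:ℝ) from norm_nonneg _)
            (ω ‖y - x‖ + δ) (lt_add_of_pos_right _ hδ)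
          have rseq : Tendsto (fun m => ‖y - xk (J m)‖) atTop (𝓝[Set.Ici (0:ℝ)] ‖y - x‖) :=
            tendsto_nhdsWithin_iff.mpr ⟨((tendsto_const_nhds (x := y)).sub hxJ).norm,
              Eventually.of_forall fun m => norm_nonneg _⟩
          have hev := rseq.eventually husc
          have hf : Tendsto (fun m => φk (J m) y) atTop (𝓝 (φ y)) :=
            (hφconv.tendsto_at y).comp hJ
          have hg2 : Tendsto (fun m => φk (J m) (xk (J m)) +
              (inner ℝ (pSk (J m) (xk (J m))) (y - xk (J m)) : ℝ) +
              ‖y - xk (J m)‖ * (ω ‖y - x‖ + δ)) atTop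
              (𝓝 (φ x + (inner ℝ a (y - x) : ℝ) + ‖y - x‖ * (ω ‖y - x‖ + δ))) :=
            (hφxJ.add (hqJ.inner ((tendsto_const_nhds (x := y)).sub hxJ))).add
              ((((tendsto_const_nhds (x := y)).sub hxJ).norm).mul_const _)
          have hle : ∀ᶠ m in atTop, φk (J m) y ≤ φk (J m) (xk (J m)) +
              (inner ℝ (pSk (J m) (xk (J m))) (y - xk (J m)) : ℝ) +
              ‖y - xk (J m)‖ * (ω ‖y - x‖ + δ) := by
            filter_upwards [hev] with m hm
            have hp := (hpSk (J m) (xk (J m))).1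
            simp only [superdiff, Set.mem_setOf_eq] at hp
            have h0 := hp y
            have : ‖y - xk (J m)‖ * ω ‖y - xk (J m)‖ ≤
                ‖y - xk (J m)‖ * (ω ‖y - x‖ + δ) :=
              mul_le_mul_of_nonneg_left (le_of_lt hm) (norm_nonneg _)
            linarith
          have hfin := le_of_tendsto_of_tendsto hf hg2 hle
          have hexp : ‖y - x‖ * (ω ‖y - x‖ + δ) = ‖y - x‖ * ω ‖y - x‖ + ε := by
            rw [hδdef]; field_simp
          linarith
        by_contra hcon
        push_neg at hcon
        have := key ((φ y - (φ x + (inner ℝ a (y - x) : ℝ) + ‖y - x‖ * ω ‖y - x‖))/2)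
          (by linarith)
        linarith
    -- energies: H x a = H x (pS x)
    have hHJ : TendstoLocallyUniformly (fun m => Function.uncurry (Hk (J m)))
        (Function.uncurry H) atTop := tlu_comp hHconv hJ
    have hcontH : ContinuousAt (Function.uncurry H) (x, a) :=
      hH.lip.continuous.continuousAt
    have hpair : Tendsto (fun m => (xk (J m), pSk (J m) (xk (J m)))) atTop (𝓝 (x, a)) :=
      hxJ.prodMk_nhds hqJ
    have hHa : Tendsto (fun m => Hk (J m) (xk (J m)) (pSk (J m) (xk (J m)))) atTop
        (𝓝 (H x a)) := hHJ.tendsto_comp hcontH hpair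
    have hHb : Tendsto (fun m => Hk (J m) (xk (J m)) (pSk (J m) (xk (J m)))) atTop
        (𝓝 (H x (pS x))) := hE.comp hJ
    have heq : H x a = H x (pS x) := tendsto_nhds_unique hHa hHb
    -- strict convexity forces a = pS x
    have haeq : a = pS x := by
      by_contra hne
      have hm : (1/2:ℝ) • a + (1/2:ℝ) • pS x ∈ superdiff ω φ x := by
        simp only [superdiff, Set.mem_setOf_eq] at ha ⊢
        intro y
        have i1 := ha y
        have i2 := (hpS x).1 y
        have e : (inner ℝ ((1/2:ℝ) • a + (1/2:ℝ) • pS x) (y - x) : ℝ) =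
            (1/2) * (inner ℝ a (y - x) : ℝ) + (1/2) * (inner ℝ (pS x) (y - x) : ℝ) := by
          rw [inner_add_left, real_inner_smul_left, real_inner_smul_left]
        rw [e]; linarith
      have hsc' := (hH.sconv x).2 (Set.mem_univ a) (Set.mem_univ (pS x)) hne
        (by norm_num : (0:ℝ) < 1/2) (by norm_num : (0:ℝ) < 1/2) (by norm_num)
      simp only [smul_eq_mul] at hsc'
      have hmin := (hpS x).2 _ hm
      rw [heq] at hsc'
      linarith
    exact ⟨τ, haeq ▸ hqJ⟩
  · -- unbounded case: contradiction with superlinearity of H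
    exfalso
    push_neg at hbd
    have hPinf : Tendsto (fun m => ‖Q (ns m)‖) atTop atTop := by
      refine tendsto_atTop.mpr fun B => ?_
      have := hbd B
      exact this.mono fun m hm => le_of_lt hm
    -- energies are eventually bounded
    have hEb : ∀ᶠ m in atTop, Hk (ns m) (xk (ns m)) (Q (ns m)) ≤ H x (pS x) + 1 :=
      (hE.comp hns).eventually (eventually_le_nhds (lt_add_one _))
    have hnsLU : TendstoLocallyUniformly (fun m => Function.uncurry (Hk (ns m)))
        (Function.uncurry H) atTop := tlu_comp hHconv hns
    have h0b : Tendsto (fun m => Hk (ns m) (xk (ns m)) 0) atTop (𝓝 (H x 0)) :=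
      hnsLU.tendsto_comp hH.lip.continuous.continuousAt
        ((hx.comp hns).prodMk_nhds tendsto_const_nhds)
    have h0b' : ∀ᶠ m in atTop, Hk (ns m) (xk (ns m)) 0 ≤ H x 0 + 1 :=
      h0b.eventually (eventually_le_nhds (lt_add_one _))
    set M : ℝ := max (H x (pS x) + 1) (H x 0 + 1) with hM
    -- normalized directions
    have humem : ∀ m, ‖Q (ns m)‖⁻¹ • Q (ns m) ∈ Metric.closedBall (0 : En n) 1 := by
      intro m
      rw [mem_closedBall_zero_iff, norm_smul, norm_inv, norm_norm]
      rcases eq_or_ne ‖Q (ns m)‖ 0 with h | h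
      · simp [h]
      · rw [inv_mul_cancel₀ h]
    obtain ⟨u, -, σ, hσ, hu⟩ := tendsto_subseq_of_bounded Metric.isBounded_closedBall humem
    set K : ℕ → ℕ := fun m => ns (σ m) with hK
    have hKt : Tendsto K atTop atTop := hns.comp hσ.tendsto_atTop
    have hPK : Tendsto (fun m => ‖Q (K m)‖) atTop atTop := hPinf.comp hσ.tendsto_atTop
    have hu1 : ‖u‖ = 1 := by
      have hev : ∀ᶠ m in atTop, ‖(‖Q (ns (σ m))‖⁻¹ • Q (ns (σ m)) : En n)‖ = 1 := by
        filter_upwards [hPK.eventually_ge_atTop 1] with m hm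
        rw [norm_smul, norm_inv, norm_norm, inv_mul_cancel₀ (by positivity : ‖Q (ns (σ m))‖ ≠ 0)]
      have h1 : Tendsto (fun m => ‖(‖Q (ns (σ m))‖⁻¹ • Q (ns (σ m)) : En n)‖) atTop (𝓝 1) :=
        Tendsto.congr' (hev.mono fun m hm => hm.symm) tendsto_const_nhds
      exact tendsto_nhds_unique hu.norm h1
    obtain ⟨R₀, hR₀⟩ := hH.superlin (|M| + 1)
    set R : ℝ := max R₀ 1 with hR
    have hR1 : (1:ℝ) ≤ R := le_max_right _ _
    -- convexity bound along the segment
    have hcb : ∀ᶠ m in atTop, Hk (K m) (xk (K m))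
        (R • (‖Q (K m)‖⁻¹ • Q (K m))) ≤ M := by
      filter_upwards [hPK.eventually_ge_atTop R, hσ.tendsto_atTop.eventually hEb,
        hσ.tendsto_atTop.eventually h0b'] with m hmR hmE hm0
      set p := Q (K m) with hp
      have hpR : R ≤ ‖p‖ := hmR
      have hpn : (0:ℝ) < ‖p‖ := lt_of_lt_of_le (by linarith) hpR
      set t : ℝ := R / ‖p‖ with ht
      have ht0 : 0 ≤ t := div_nonneg (by linarith) (le_of_lt hpn)
      have ht1 : t ≤ 1 := (div_le_one hpn).mpr hpR
      have hcv := ((hHk (K m)).sconv (xk (K m))).convexOn.2 (Set.mem_univ p)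
        (Set.mem_univ (0 : En n)) ht0 (by linarith : (0:ℝ) ≤ 1 - t) (by ring)
      have e : t • p + (1 - t) • (0 : En n) = R • (‖p‖⁻¹ • p) := by
        rw [smul_zero, add_zero, smul_smul, ht, div_eq_mul_inv]
      rw [e] at hcv
      simp only [smul_eq_mul] at hcv
      have hE' : Hk (K m) (xk (K m)) p ≤ M := le_trans hmE (le_max_left _ _)
      have h0' : Hk (K m) (xk (K m)) 0 ≤ M := le_trans hm0 (le_max_right _ _)
      calc Hk (K m) (xk (K m)) (R • (‖p‖⁻¹ • p)) ≤
          t * Hk (K m) (xk (K m)) p + (1 - t) * Hk (K m) (xk (K m)) 0 := hcv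
        _ ≤ t * M + (1 - t) * M := by
            have := mul_le_mul_of_nonneg_left hE' ht0
            have := mul_le_mul_of_nonneg_left h0' (by linarith : (0:ℝ) ≤ 1 - t)
            linarith
        _ = M := by ring
    -- pass to the limit
    have hKLU : TendstoLocallyUniformly (fun m => Function.uncurry (Hk (K m)))
        (Function.uncurry H) atTop := tlu_comp hHconv hKt
    have hRu : Tendsto (fun m => (R • (‖Q (K m)‖⁻¹ • Q (K m)) : En n)) atTop
        (𝓝 (R • u)) := hu.const_smul R
    have hHRu : Tendsto (fun m => Hk (K m) (xk (K m)) (R • (‖Q (K m)‖⁻¹ • Q (K m))))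
        atTop (𝓝 (H x (R • u))) :=
      hKLU.tendsto_comp hH.lip.continuous.continuousAt
        ((hx.comp hKt).prodMk_nhds hRu)
    have hfin : H x (R • u) ≤ M := le_of_tendsto hHRu hcb
    have hnRu : ‖(R • u : En n)‖ = R := by
      rw [norm_smul, hu1, mul_one, Real.norm_eq_abs, abs_of_pos (by linarith)]
    have hsl := hR₀ x (R • u) (by rw [hnRu]; exact le_max_left _ _)
    rw [hnRu] at hsl
    nlinarith [le_abs_self M, abs_nonneg M]
end
end

section
/- Let φ be semiconcave, H satisfy (H1)-(H3), with Lagrangian L. For any x: L(x,v) + H(x, p#(x)) ≥ ∂φ(x,v) for all v, where ∂φ(x,v) = min{⟨p,v⟩ : p ∈ D⁺φ(x)} is the directional derivative; moreover equality holds if and only if v = H_p(x, p#(x)). -/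
open MeasureTheory Filter Topology Set

noncomputable section

/-- The directional derivative ∂φ(x,v) = min{⟨p,v⟩ : p ∈ D⁺φ(x)} of a semiconcave function. -/
def dirDeriv {n : ℕ} (ω : ℝ → ℝ) (φ : En n → ℝ) (x v : En n) : ℝ :=
  sInf ((fun p => (inner ℝ p v : ℝ)) '' superdiff ω φ x)

section Helpers

lemma deriv_le_of_slope (g : ℝ → ℝ) (d c : ℝ) (hg : HasDerivAt g d 0)
    (h : ∀ t ∈ Set.Ioc (0:ℝ) 1, g t - g 0 ≤ t * c) : d ≤ c := by
  have hset : Set.Ioi (0:ℝ) \ {0} = Set.Ioi 0 :=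
    Set.diff_singleton_eq_self (by simp)
  have h' : Tendsto (slope g 0) (𝓝[Set.Ioi (0:ℝ)] 0) (𝓝 d) := by
    have := hasDerivWithinAt_iff_tendsto_slope.mp (hg.hasDerivWithinAt (s := Set.Ioi 0))
    rwa [hset] at this
  refine le_of_tendsto h' ?_
  have h1 : ∀ᶠ t in 𝓝[Set.Ioi (0:ℝ)] 0, t ∈ Set.Ioi (0:ℝ) := eventually_mem_nhdsWithin
  have h2 : ∀ᶠ t in 𝓝[Set.Ioi (0:ℝ)] 0, t < 1 :=
    mem_nhdsWithin_of_mem_nhds (Iio_mem_nhds zero_lt_one)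
  filter_upwards [h1, h2] with t ht hlt
  have ht' : (0:ℝ) < t := ht
  have := h t ⟨ht', hlt.le⟩
  rw [slope_def_field]
  rw [div_le_iff₀ (by linarith : (0:ℝ) < t - 0)]
  linarith

lemma deriv_nonneg_of_min (g : ℝ → ℝ) (d : ℝ) (hg : HasDerivAt g d 0)
    (h : ∀ t ∈ Set.Ioc (0:ℝ) 1, g 0 ≤ g t) : 0 ≤ d := by
  have := deriv_le_of_slope (fun t => -g t) (-d) 0 hg.neg
    (fun t ht => by have := h t ht; simp only [mul_zero]; linarith)
  linarith

lemma line_hasDerivAt {n : ℕ} (f : En n → ℝ) (f' : En n) (a b : En n)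
    (hf : HasGradientAt f f' a) :
    HasDerivAt (fun t : ℝ => f (a + t • (b - a))) ((inner ℝ f' (b - a) : ℝ)) 0 := by
  have h0 : a + (0:ℝ) • (b - a) = a := by simp
  rw [← h0] at hf
  have hcurve : HasDerivAt (fun t : ℝ => a + t • (b - a)) (b - a) 0 := by
    simpa using ((hasDerivAt_id (0:ℝ)).smul_const (b - a)).const_add a
  have hcomp := hf.hasFDerivAt.comp_hasDerivAt 0 hcurve
  simp [InnerProductSpace.toDual_apply_apply] at hcomp
  exact hcomp

lemma tangent_le {n : ℕ} (f : En n → ℝ) (f' : En n) (a : En n)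
    (hconv : ConvexOn ℝ Set.univ f) (hf : HasGradientAt f f' a) (b : En n) :
    (inner ℝ f' (b - a) : ℝ) ≤ f b - f a := by
  apply deriv_le_of_slope _ _ _ (line_hasDerivAt f f' a b hf)
  intro t ht
  have h := hconv.2 (Set.mem_univ b) (Set.mem_univ a) ht.1.le
    (by linarith [ht.2] : (0:ℝ) ≤ 1 - t) (by ring)
  have he : t • b + (1 - t) • a = a + t • (b - a) := by module
  rw [he] at h
  simp only [smul_eq_mul, zero_smul, add_zero] at h ⊢
  nlinarith [h]

end Helpers


/-- L(x,v) + H(x,p#(x)) ≥ ∂φ(x,v), with equality iff v = H_p(x,p#(x)). -/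
theorem stmt_11 {n : ℕ} (ω : ℝ → ℝ) (hω : IsModulus ω)
    (φ : En n → ℝ) (hφ : Semiconcave ω φ)
    (H : En n → En n → ℝ) (Hp : En n → En n → En n) (hH : HamCond H Hp)
    (pS : En n → En n) (hpS : IsMinSel ω φ H pS) (x : En n) :
    (∀ v : En n, dirDeriv ω φ x v ≤ Lag H x v + H x (pS x)) ∧
    (∀ v : En n,
      (Lag H x v + H x (pS x) = dirDeriv ω φ x v ↔ v = Hp x (pS x))) := by
  obtain ⟨hmem, hmin⟩ := hpS x
  set p₀ := pS x with hp₀def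
  set S := superdiff ω φ x with hSdef
  -- convexity of segments towards S
  have hSconv : ∀ q ∈ S, ∀ t ∈ Set.Ioc (0:ℝ) 1, p₀ + t • (q - p₀) ∈ S := by
    intro q hq t ht
    simp only [hSdef, superdiff, Set.mem_setOf_eq] at hq ⊢
    intro y
    have h1 := hmem y
    have h2 := hq y
    have e : (inner ℝ (p₀ + t • (q - p₀)) (y - x) : ℝ)
        = inner ℝ p₀ (y - x) + t * ((inner ℝ q (y - x) : ℝ) - inner ℝ p₀ (y - x)) := by
      simp only [inner_add_left, real_inner_smul_left, inner_sub_left]; try ring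
    rw [e]
    nlinarith [h1, h2, ht.1, ht.2,
      mul_le_mul_of_nonneg_left h2 ht.1.le,
      mul_le_mul_of_nonneg_left h1 (by linarith [ht.2] : (0:ℝ) ≤ 1 - t)]
  have hmem' : p₀ ∈ superdiff ω φ x := hmem
  have hbA : ∀ v : En n, BddAbove (Set.range fun p : En n => (inner ℝ p v : ℝ) - H x p) := by
    intro v
    obtain ⟨R, hR⟩ := hH.superlin (‖v‖ + 1)
    have hc : Continuous (H x) := continuous_iff_continuousAt.mpr
      (fun p => (hH.grad x p).hasFDerivAt.differentiableAt.continuousAt)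
    have hcf : Continuous (fun p : En n => (inner ℝ p v : ℝ) - H x p) :=
      (continuous_id.inner continuous_const).sub hc
    obtain ⟨M, hM⟩ := ((isCompact_closedBall (0 : En n) (max R 0)).bddAbove_image
      hcf.continuousOn)
    refine ⟨max M 0, ?_⟩
    rintro _ ⟨p, rfl⟩
    by_cases hp : ‖p‖ ≤ max R 0
    · exact le_trans (hM ⟨p, by simpa [Metric.mem_closedBall, dist_zero_right] using hp, rfl⟩)
        (le_max_left _ _)
    · push_neg at hp
      have hRp : R ≤ ‖p‖ := le_trans (le_max_left _ _) hp.le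
      have hsl := hR x p hRp
      have hi : (inner ℝ p v : ℝ) ≤ ‖p‖ * ‖v‖ := real_inner_le_norm p v
      have hn : (0:ℝ) ≤ ‖p‖ := norm_nonneg p
      refine le_trans ?_ (le_max_right _ _)
      show (inner ℝ p v : ℝ) - H x p ≤ 0
      nlinarith
  have hbB : ∀ v : En n, BddBelow ((fun p : En n => (inner ℝ p v : ℝ)) '' S) := by
    intro v
    refine ⟨φ (x + v) - φ x - ‖v‖ * ω ‖v‖, ?_⟩
    rintro r ⟨p, hp, rfl⟩
    have h := hp (x + v)
    simp only [add_sub_cancel_left] at h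
    show φ (x + v) - φ x - ‖v‖ * ω ‖v‖ ≤ (inner ℝ p v : ℝ)
    linarith
  have hne : ∀ v : En n, ((fun p : En n => (inner ℝ p v : ℝ)) '' S).Nonempty :=
    fun v => ⟨_, p₀, hmem, rfl⟩
  have h1 : ∀ v : En n, dirDeriv ω φ x v ≤ (inner ℝ p₀ v : ℝ) :=
    fun v => csInf_le (hbB v) ⟨p₀, hmem, rfl⟩
  have h2 : ∀ v : En n, (inner ℝ p₀ v : ℝ) - H x p₀ ≤ Lag H x v :=
    fun v => le_ciSup (hbA v) p₀
  have htan : ∀ p : En n, (inner ℝ (Hp x p₀) (p - p₀) : ℝ) ≤ H x p - H x p₀ :=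
    fun p => tangent_le (H x) (Hp x p₀) p₀ (hH.sconv x).convexOn (hH.grad x p₀) p
  have hA : ∀ q ∈ S, (inner ℝ p₀ (Hp x p₀) : ℝ) ≤ inner ℝ q (Hp x p₀) := by
    intro q hq
    have hg := line_hasDerivAt (H x) (Hp x p₀) p₀ q (hH.grad x p₀)
    have hd : 0 ≤ (inner ℝ (Hp x p₀) (q - p₀) : ℝ) := by
      apply deriv_nonneg_of_min _ _ hg
      intro t ht
      simp only [zero_smul, add_zero]
      exact hmin _ (hSconv q hq t ht)
    rw [inner_sub_right] at hd
    have e1 : (inner ℝ p₀ (Hp x p₀) : ℝ) = inner ℝ (Hp x p₀) p₀ := real_inner_comm _ _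
    have e2 : (inner ℝ q (Hp x p₀) : ℝ) = inner ℝ (Hp x p₀) q := real_inner_comm _ _
    linarith
  constructor
  · intro v
    linarith [h1 v, h2 v]
  · intro v
    constructor
    · -- equality implies v = Hp x p₀
      intro heq
      have hL1 : Lag H x v ≤ (inner ℝ p₀ v : ℝ) - H x p₀ := by linarith [h1 v]
      have hLeq : Lag H x v = (inner ℝ p₀ v : ℝ) - H x p₀ := le_antisymm hL1 (h2 v)
      have hmax : IsLocalMax (fun p : En n => (inner ℝ v p : ℝ) - H x p) p₀ := by
        apply Filter.Eventually.of_forall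
        intro p
        have hp : (inner ℝ p v : ℝ) - H x p ≤ Lag H x v := le_ciSup (hbA v) p
        have e1 : (inner ℝ v p : ℝ) = inner ℝ p v := real_inner_comm _ _
        have e2 : (inner ℝ v p₀ : ℝ) = inner ℝ p₀ v := real_inner_comm _ _
        show (inner ℝ v p : ℝ) - H x p ≤ (inner ℝ v p₀ : ℝ) - H x p₀
        linarith [hp, hLeq.le]
      have hfd : HasFDerivAt (fun p : En n => (inner ℝ v p : ℝ) - H x p)
          (innerSL ℝ v - InnerProductSpace.toDual ℝ (En n) (Hp x p₀)) p₀ :=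
        ((innerSL ℝ v).hasFDerivAt).sub (hH.grad x p₀).hasFDerivAt
      have h0 := hmax.hasFDerivAt_eq_zero hfd
      have h0' := congrArg (fun L : En n →L[ℝ] ℝ => L (v - Hp x p₀)) h0
      simp only [ContinuousLinearMap.sub_apply, innerSL_apply_apply, InnerProductSpace.toDual_apply_apply,
        ContinuousLinearMap.zero_apply] at h0'
      have hz : (inner ℝ (v - Hp x p₀) (v - Hp x p₀) : ℝ) = 0 := by
        rw [inner_sub_left]; linarith
      exact sub_eq_zero.mp (inner_self_eq_zero.mp hz)
    · -- v = Hp x p₀ implies equality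
      intro hv
      subst hv
      have hLup : Lag H x (Hp x p₀) ≤ (inner ℝ p₀ (Hp x p₀) : ℝ) - H x p₀ := by
        apply ciSup_le
        intro p
        have ht := htan p
        rw [inner_sub_right] at ht
        have e1 := real_inner_comm p (Hp x p₀)
        have e2 := real_inner_comm p₀ (Hp x p₀)
        linarith
      have hLeq : Lag H x (Hp x p₀) = (inner ℝ p₀ (Hp x p₀) : ℝ) - H x p₀ :=
        le_antisymm hLup (h2 _)
      have hDeq : dirDeriv ω φ x (Hp x p₀) = (inner ℝ p₀ (Hp x p₀) : ℝ) :=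
        le_antisymm (h1 _) (le_csInf (hne _) (by rintro _ ⟨q, hq, rfl⟩; exact hA q hq))
      rw [hLeq, hDeq]; ring
end
end
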